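/- Fix positive integers I, J, K, R, D and reals q, α, β > 0, and let X(R,g) be the solution set for a map g. Let Y = X♮ + N with X♮, N ∈ ℝ^{I×J×K}, and let Ω ⊆ [I]×[J] be nonempty. For a tensor T, let (M∘T) denote the masked tensor with (M∘T)(i,j,:) = T(i,j,:) if (i,j) ∈ Ω and (M∘T)(i,j,:) = 0 otherwise. Define L̂(X̃) = (1/(|Ω|K)) Σ_{(i,j)∈Ω} ‖Y(i,j,:) − X̃(i,j,:)‖₂², L(X̃) = (1/(IJK)) Σ_{(i,j)∈[I]×[J]} ‖Y(i,j,:) − X̃(i,j,:)‖₂², and Gap⋆(Ω) = sup_{X̃∈X(R,g)} |√(L̂(X̃)) − √(L(X̃))|. Let X⋆ ∈ X(R,g) be a minimizer of L̂ over X(R,g), and let X̃* ∈ X(R,g) be a minimizer of ‖X̃ − X♮‖_F over X(R,g), with Err_rep = ‖X̃* − X♮‖_F. Then: (1/√(IJK)) ‖X⋆ − X♮‖_F ≤ (1/√(IJK)) ‖N‖_F + Gap⋆(Ω) + (1/√(|Ω|K)) ( ‖M∘N‖_F + Err_rep ). -/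

import Mathlib

/-- The Euclidean norm of a vector in `ℝ^n`. -/
noncomputable def euclNorm {n : ℕ} (x : Fin n → ℝ) : ℝ := Real.sqrt (∑ i, x i ^ 2)

/-- The Frobenius norm of a real matrix. -/
noncomputable def frobNorm {m n : ℕ} (X : Matrix (Fin m) (Fin n) ℝ) : ℝ :=
  Real.sqrt (∑ i, ∑ j, X i j ^ 2)

/-- The Frobenius (Euclidean) norm of a tensor in `ℝ^{I×J×K}`. -/
noncomputable def tnorm {I J K : ℕ} (X : Fin I → Fin J → Fin K → ℝ) : ℝ :=
  Real.sqrt (∑ i, ∑ j, ∑ k, X i j k ^ 2)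

/-- The solution set `X(R,g)`: all tensors `Σ_{r=1}^R g(z_r) ∘ c_r` with `‖z_r‖₂ ≤ q` and
`‖c_r‖₂ ≤ α`. -/
def solSet (I J K R D : ℕ) (q α : ℝ) (g : (Fin D → ℝ) → Matrix (Fin I) (Fin J) ℝ) :
    Set (Fin I → Fin J → Fin K → ℝ) :=
  {X | ∃ (z : Fin R → Fin D → ℝ) (c : Fin R → Fin K → ℝ),
    (∀ r, euclNorm (z r) ≤ q) ∧ (∀ r, euclNorm (c r) ≤ α) ∧
    X = fun i j k => ∑ r, g (z r) i j * c r k}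


namespace RecovAux


lemma tnorm_nonneg {I J K : ℕ} (X : Fin I → Fin J → Fin K → ℝ) : 0 ≤ tnorm X :=
  Real.sqrt_nonneg _

noncomputable def emb {I J K : ℕ} (T : Fin I → Fin J → Fin K → ℝ) :
    EuclideanSpace ℝ (Fin I × Fin J × Fin K) := WithLp.toLp 2 (fun p => T p.1 p.2.1 p.2.2)

lemma tnorm_eq_norm {I J K : ℕ} (T : Fin I → Fin J → Fin K → ℝ) : tnorm T = ‖emb T‖ := by
  rw [EuclideanSpace.norm_eq, tnorm]
  congr 1
  rw [Fintype.sum_prod_type]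
  refine Finset.sum_congr rfl fun i _ => ?_
  rw [Fintype.sum_prod_type]
  refine Finset.sum_congr rfl fun j _ => Finset.sum_congr rfl fun k _ => ?_
  simp [emb, Real.norm_eq_abs, sq_abs]

lemma tnorm_triangle {I J K : ℕ} (A B : Fin I → Fin J → Fin K → ℝ) :
    tnorm (A + B) ≤ tnorm A + tnorm B := by
  rw [tnorm_eq_norm, tnorm_eq_norm, tnorm_eq_norm]
  exact norm_add_le (emb A) (emb B)

lemma tnorm_mono_sq {I J K : ℕ} {A B : Fin I → Fin J → Fin K → ℝ}
    (h : ∀ i j k, A i j k ^ 2 ≤ B i j k ^ 2) : tnorm A ≤ tnorm B :=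
  Real.sqrt_le_sqrt (Finset.sum_le_sum fun i _ => Finset.sum_le_sum fun j _ =>
    Finset.sum_le_sum fun k _ => h i j k)

lemma sum_masked {I J : ℕ} (Ω : Finset (Fin I × Fin J)) (a : Fin I → Fin J → ℝ) :
    (∑ i, ∑ j, if (i, j) ∈ Ω then a i j else 0) = ∑ p ∈ Ω, a p.1 p.2 := by
  rw [← Fintype.sum_prod_type (f := fun p : Fin I × Fin J => if p ∈ Ω then a p.1 p.2 else 0)]
  rw [Finset.sum_ite_mem, Finset.univ_inter]

lemma entry_le_tnorm {I J K : ℕ} (T : Fin I → Fin J → Fin K → ℝ) (i : Fin I) (j : Fin J)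
    (k : Fin K) : |T i j k| ≤ tnorm T := by
  rw [tnorm, ← Real.sqrt_sq_eq_abs]
  apply Real.sqrt_le_sqrt
  calc T i j k ^ 2 ≤ ∑ k', T i j k' ^ 2 :=
        Finset.single_le_sum (f := fun k' => T i j k' ^ 2)
          (fun _ _ => sq_nonneg _) (Finset.mem_univ k)
    _ ≤ ∑ j', ∑ k', T i j' k' ^ 2 :=
        Finset.single_le_sum (f := fun j' => ∑ k', T i j' k' ^ 2)
          (fun _ _ => Finset.sum_nonneg fun _ _ => sq_nonneg _) (Finset.mem_univ j)
    _ ≤ _ :=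
        Finset.single_le_sum (f := fun i' => ∑ j', ∑ k', T i' j' k' ^ 2)
          (fun _ _ => Finset.sum_nonneg fun _ _ => Finset.sum_nonneg fun _ _ => sq_nonneg _)
          (Finset.mem_univ i)

lemma entry_le_frob {m n : ℕ} (X : Matrix (Fin m) (Fin n) ℝ) (i : Fin m) (j : Fin n) :
    |X i j| ≤ frobNorm X := by
  rw [frobNorm, ← Real.sqrt_sq_eq_abs]
  apply Real.sqrt_le_sqrt
  calc X i j ^ 2 ≤ ∑ j', X i j' ^ 2 :=
        Finset.single_le_sum (f := fun j' => X i j' ^ 2)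
          (fun _ _ => sq_nonneg _) (Finset.mem_univ j)
    _ ≤ _ :=
        Finset.single_le_sum (f := fun i' => ∑ j', X i' j' ^ 2)
          (fun _ _ => Finset.sum_nonneg fun _ _ => sq_nonneg _)
          (Finset.mem_univ i)

lemma entry_le_eucl {n : ℕ} (x : Fin n → ℝ) (i : Fin n) : |x i| ≤ euclNorm x := by
  rw [euclNorm, ← Real.sqrt_sq_eq_abs]
  exact Real.sqrt_le_sqrt (Finset.single_le_sum (f := fun i' => x i' ^ 2) (fun _ _ => sq_nonneg _) (Finset.mem_univ i))



lemma solSet_entry_bound {I J K R D : ℕ} {q α β : ℝ} (hβ : 0 ≤ β) (hα : 0 ≤ α)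
    {g : (Fin D → ℝ) → Matrix (Fin I) (Fin J) ℝ}
    (hg : ∀ z : Fin D → ℝ, euclNorm z ≤ q → frobNorm (g z) ≤ β)
    {X : Fin I → Fin J → Fin K → ℝ} (hX : X ∈ solSet I J K R D q α g)
    (i : Fin I) (j : Fin J) (k : Fin K) : |X i j k| ≤ R * (β * α) := by
  obtain ⟨z, c, hz, hc, rfl⟩ := hX
  calc |∑ r, g (z r) i j * c r k| ≤ ∑ r, |g (z r) i j * c r k| :=
        Finset.abs_sum_le_sum_abs _ _
    _ ≤ ∑ _r : Fin R, β * α := by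
        refine Finset.sum_le_sum fun r _ => ?_
        rw [abs_mul]
        exact mul_le_mul ((entry_le_frob _ i j).trans (hg _ (hz r)))
          ((entry_le_eucl _ k).trans (hc r)) (abs_nonneg _) hβ
    _ = R * (β * α) := by simp [mul_comm]

lemma sqrt_scaled (c s : ℝ) (hc : 0 ≤ c) :
    Real.sqrt ((1 / c) * s) = (1 / Real.sqrt c) * Real.sqrt s := by
  rw [one_div, one_div, Real.sqrt_mul (inv_nonneg.mpr hc), Real.sqrt_inv]

end RecovAux

open RecovAux in
set_option maxHeartbeats 1600000 in
/-- The deterministic error decomposition of Theorem 2 (Recoverability): if `X⋆` minimizes the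
empirical loss over `X(R,g)` and `X̃*` is the best approximation of `X♮` within `X(R,g)`, then
`(1/√(IJK))‖X⋆ − X♮‖_F ≤ (1/√(IJK))‖N‖_F + Gap⋆(Ω) + (‖M∘N‖_F + Err_rep)/√(|Ω|K)`. -/
theorem recoverability_decomposition (I J K R D : ℕ)
    (hI : 0 < I) (hJ : 0 < J) (hK : 0 < K) (hR : 0 < R) (hD : 0 < D)
    (q α β : ℝ) (hq : 0 < q) (hα : 0 < α) (hβ : 0 < β)
    (g : (Fin D → ℝ) → Matrix (Fin I) (Fin J) ℝ)
    (hg : ∀ z : Fin D → ℝ, euclNorm z ≤ q → frobNorm (g z) ≤ β)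
    (Xnat Noise Y : Fin I → Fin J → Fin K → ℝ) (hY : Y = Xnat + Noise)
    (Ω : Finset (Fin I × Fin J)) (hΩ : Ω.Nonempty)
    (Xstar : Fin I → Fin J → Fin K → ℝ) (hXstar : Xstar ∈ solSet I J K R D q α g)
    (hminE : ∀ X ∈ solSet I J K R D q α g,
      (1 / ((Ω.card : ℝ) * K)) * ∑ p ∈ Ω, ∑ k, (Y p.1 p.2 k - Xstar p.1 p.2 k) ^ 2 ≤
        (1 / ((Ω.card : ℝ) * K)) * ∑ p ∈ Ω, ∑ k, (Y p.1 p.2 k - X p.1 p.2 k) ^ 2)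
    (Xast : Fin I → Fin J → Fin K → ℝ) (hXast : Xast ∈ solSet I J K R D q α g)
    (hminR : ∀ X ∈ solSet I J K R D q α g, tnorm (Xast - Xnat) ≤ tnorm (X - Xnat)) :
    (1 / Real.sqrt ((I : ℝ) * J * K)) * tnorm (Xstar - Xnat) ≤
      (1 / Real.sqrt ((I : ℝ) * J * K)) * tnorm Noise +
      (⨆ X : ↥(solSet I J K R D q α g),
        |Real.sqrt ((1 / ((Ω.card : ℝ) * K)) *
            ∑ p ∈ Ω, ∑ k, (Y p.1 p.2 k - X.1 p.1 p.2 k) ^ 2) -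
          Real.sqrt ((1 / ((I : ℝ) * J * K)) *
            ∑ i, ∑ j, ∑ k, (Y i j k - X.1 i j k) ^ 2)|) +
      (1 / Real.sqrt ((Ω.card : ℝ) * K)) *
        (tnorm (fun i j k => if (i, j) ∈ Ω then Noise i j k else 0) +
          tnorm (Xast - Xnat)) := by
  have hI' : (0:ℝ) < I := by exact_mod_cast hI
  have hJ' : (0:ℝ) < J := by exact_mod_cast hJ
  have hK' : (0:ℝ) < K := by exact_mod_cast hK
  have hΩ' : (0:ℝ) < Ω.card := by exact_mod_cast Finset.card_pos.mpr hΩ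
  have hIJK : (0:ℝ) < (I:ℝ) * J * K := by positivity
  have hΩK : (0:ℝ) < (Ω.card:ℝ) * K := by positivity
  set S := solSet I J K R D q α g with hS
  set Lh : (Fin I → Fin J → Fin K → ℝ) → ℝ := fun X =>
    (1 / ((Ω.card : ℝ) * K)) * ∑ p ∈ Ω, ∑ k, (Y p.1 p.2 k - X p.1 p.2 k) ^ 2 with hLh
  set Lf : (Fin I → Fin J → Fin K → ℝ) → ℝ := fun X =>
    (1 / ((I : ℝ) * J * K)) * ∑ i, ∑ j, ∑ k, (Y i j k - X i j k) ^ 2 with hLf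
  -- the goal's sup
  have hGoal : (⨆ X : ↥S,
        |Real.sqrt ((1 / ((Ω.card : ℝ) * K)) *
            ∑ p ∈ Ω, ∑ k, (Y p.1 p.2 k - X.1 p.1 p.2 k) ^ 2) -
          Real.sqrt ((1 / ((I : ℝ) * J * K)) *
            ∑ i, ∑ j, ∑ k, (Y i j k - X.1 i j k) ^ 2)|) =
      ⨆ X : ↥S, |Real.sqrt (Lh X.1) - Real.sqrt (Lf X.1)| := rfl
  rw [hGoal]
  set G := ⨆ X : ↥S, |Real.sqrt (Lh X.1) - Real.sqrt (Lf X.1)| with hG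
  -- uniform bound for BddAbove
  set B : ℝ := tnorm Y + R * (β * α) with hBdef
  have hB0 : (0:ℝ) ≤ B := add_nonneg (tnorm_nonneg _) (by positivity)
  have hentry : ∀ X ∈ S, ∀ (i : Fin I) (j : Fin J) (k : Fin K),
      (Y i j k - X i j k) ^ 2 ≤ B ^ 2 := by
    intro X hX i j k
    have h1 : |Y i j k - X i j k| ≤ B := by
      calc |Y i j k - X i j k| ≤ |Y i j k| + |X i j k| := abs_sub _ _
        _ ≤ tnorm Y + R * (β * α) :=
            add_le_add (entry_le_tnorm Y i j k)
              (solSet_entry_bound hβ.le hα.le hg hX i j k)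
    calc (Y i j k - X i j k) ^ 2 = |Y i j k - X i j k| ^ 2 := (sq_abs _).symm
      _ ≤ B ^ 2 := pow_le_pow_left₀ (abs_nonneg _) h1 2
  have hLhb : ∀ X ∈ S, Real.sqrt (Lh X) ≤ B := by
    intro X hX
    have hsum : (∑ p ∈ Ω, ∑ k, (Y p.1 p.2 k - X p.1 p.2 k) ^ 2) ≤
        (Ω.card : ℝ) * ((K : ℝ) * B ^ 2) := by
      calc (∑ p ∈ Ω, ∑ k, (Y p.1 p.2 k - X p.1 p.2 k) ^ 2) ≤
          ∑ _p ∈ Ω, (K : ℝ) * B ^ 2 := by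
            refine Finset.sum_le_sum fun p _ => ?_
            calc (∑ k, (Y p.1 p.2 k - X p.1 p.2 k) ^ 2) ≤ ∑ _k : Fin K, B ^ 2 :=
                Finset.sum_le_sum fun k _ => hentry X hX p.1 p.2 k
              _ = (K : ℝ) * B ^ 2 := by simp [mul_comm]
        _ = (Ω.card : ℝ) * ((K : ℝ) * B ^ 2) := by simp [mul_comm]
    have : Lh X ≤ B ^ 2 := by
      rw [hLh]
      calc (1 / ((Ω.card : ℝ) * K)) * ∑ p ∈ Ω, ∑ k, (Y p.1 p.2 k - X p.1 p.2 k) ^ 2 ≤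
          (1 / ((Ω.card : ℝ) * K)) * ((Ω.card : ℝ) * ((K : ℝ) * B ^ 2)) :=
            mul_le_mul_of_nonneg_left hsum (by positivity)
        _ = B ^ 2 := by field_simp
    calc Real.sqrt (Lh X) ≤ Real.sqrt (B ^ 2) := Real.sqrt_le_sqrt this
      _ = B := Real.sqrt_sq hB0
  have hLfb : ∀ X ∈ S, Real.sqrt (Lf X) ≤ B := by
    intro X hX
    have hsum : (∑ i, ∑ j, ∑ k, (Y i j k - X i j k) ^ 2) ≤
        (I : ℝ) * ((J : ℝ) * ((K : ℝ) * B ^ 2)) := by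
      calc (∑ i, ∑ j, ∑ k, (Y i j k - X i j k) ^ 2) ≤
          ∑ _i : Fin I, ∑ _j : Fin J, ∑ _k : Fin K, B ^ 2 :=
            Finset.sum_le_sum fun i _ => Finset.sum_le_sum fun j _ =>
              Finset.sum_le_sum fun k _ => hentry X hX i j k
        _ = (I : ℝ) * ((J : ℝ) * ((K : ℝ) * B ^ 2)) := by simp [mul_comm]
    have : Lf X ≤ B ^ 2 := by
      rw [hLf]
      calc (1 / ((I : ℝ) * J * K)) * ∑ i, ∑ j, ∑ k, (Y i j k - X i j k) ^ 2 ≤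
          (1 / ((I : ℝ) * J * K)) * ((I : ℝ) * ((J : ℝ) * ((K : ℝ) * B ^ 2))) :=
            mul_le_mul_of_nonneg_left hsum (by positivity)
        _ = B ^ 2 := by field_simp
    calc Real.sqrt (Lf X) ≤ Real.sqrt (B ^ 2) := Real.sqrt_le_sqrt this
      _ = B := Real.sqrt_sq hB0
  have hbdd : BddAbove (Set.range fun X : ↥S => |Real.sqrt (Lh X.1) - Real.sqrt (Lf X.1)|) := by
    refine ⟨B, fun y hy => ?_⟩
    obtain ⟨X, rfl⟩ := hy
    rw [abs_sub_le_iff]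
    constructor
    · linarith [hLhb X.1 X.2, Real.sqrt_nonneg (Lf X.1)]
    · linarith [hLfb X.1 X.2, Real.sqrt_nonneg (Lh X.1)]
  -- step 3: gap bound at Xstar
  have hgap : Real.sqrt (Lf Xstar) ≤ Real.sqrt (Lh Xstar) + G := by
    have h := le_ciSup hbdd (⟨Xstar, hXstar⟩ : ↥S)
    have h2 := neg_abs_le (Real.sqrt (Lh Xstar) - Real.sqrt (Lf Xstar))
    simp only at h
    linarith
  -- step 1: triangle
  have h1 : tnorm (Xstar - Xnat) ≤ tnorm (Xstar - Y) + tnorm Noise := by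
    have he : Xstar - Xnat = (Xstar - Y) + Noise := by rw [hY]; abel
    rw [he]; exact tnorm_triangle _ _
  -- step 2
  have h2 : (1 / Real.sqrt ((I : ℝ) * J * K)) * tnorm (Xstar - Y) = Real.sqrt (Lf Xstar) := by
    symm
    rw [hLf]
    dsimp only
    rw [sqrt_scaled _ _ hIJK.le, tnorm]
    congr 2
    refine Finset.sum_congr rfl fun i _ => Finset.sum_congr rfl fun j _ =>
      Finset.sum_congr rfl fun k _ => ?_
    simp only [Pi.sub_apply]
    ring
  -- step 4
  have h4 : Real.sqrt (Lh Xstar) ≤ Real.sqrt (Lh Xast) :=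
    Real.sqrt_le_sqrt (hminE Xast hXast)
  -- step 5
  have h5 : Real.sqrt (Lh Xast) ≤ (1 / Real.sqrt ((Ω.card : ℝ) * K)) *
      (tnorm (fun i j k => if (i, j) ∈ Ω then Noise i j k else 0) + tnorm (Xast - Xnat)) := by
    have hmask : Real.sqrt (Lh Xast) = (1 / Real.sqrt ((Ω.card : ℝ) * K)) *
        tnorm (fun i j k => if (i, j) ∈ Ω then Y i j k - Xast i j k else 0) := by
      rw [hLh]
      dsimp only
      rw [sqrt_scaled _ _ hΩK.le, tnorm]
      congr 2
      rw [← sum_masked Ω (fun i j => ∑ k, (Y i j k - Xast i j k) ^ 2)]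
      refine Finset.sum_congr rfl fun i _ => Finset.sum_congr rfl fun j _ => ?_
      by_cases h : (i, j) ∈ Ω
      · simp only [if_pos h]
      · simp only [if_neg h]
        simp
    rw [hmask]
    have hsplit : (fun i j k => if (i, j) ∈ Ω then Y i j k - Xast i j k else 0) =
        (fun i j k => if (i, j) ∈ Ω then Noise i j k else 0) +
        (fun i j k => if (i, j) ∈ Ω then Xnat i j k - Xast i j k else 0) := by
      funext i j k
      simp only [hY, Pi.add_apply]
      by_cases h : (i, j) ∈ Ω
      · simp only [if_pos h]; ring
      · simp only [if_neg h]; ring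
    have htri := tnorm_triangle (fun i j k => if (i, j) ∈ Ω then Noise i j k else 0)
      (fun i j k => if (i, j) ∈ Ω then Xnat i j k - Xast i j k else 0)
    rw [← hsplit] at htri
    have hm2 : tnorm (fun i j k => if (i, j) ∈ Ω then Xnat i j k - Xast i j k else 0) ≤
        tnorm (Xast - Xnat) := by
      refine tnorm_mono_sq fun i j k => ?_
      by_cases h : (i, j) ∈ Ω
      · simp only [if_pos h, Pi.sub_apply]
        exact le_of_eq (by ring)
      · rw [if_neg h]
        simpa using sq_nonneg ((Xast - Xnat) i j k)
    have hc2 : (0:ℝ) ≤ 1 / Real.sqrt ((Ω.card : ℝ) * K) := by positivity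
    calc (1 / Real.sqrt ((Ω.card : ℝ) * K)) *
          tnorm (fun i j k => if (i, j) ∈ Ω then Y i j k - Xast i j k else 0) ≤
        (1 / Real.sqrt ((Ω.card : ℝ) * K)) *
          (tnorm (fun i j k => if (i, j) ∈ Ω then Noise i j k else 0) +
            tnorm (fun i j k => if (i, j) ∈ Ω then Xnat i j k - Xast i j k else 0)) :=
          mul_le_mul_of_nonneg_left htri hc2
      _ ≤ _ := mul_le_mul_of_nonneg_left (by linarith) hc2
  -- combine
  have hc1 : (0:ℝ) ≤ 1 / Real.sqrt ((I : ℝ) * J * K) := by positivity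
  have hcomb := mul_le_mul_of_nonneg_left h1 hc1
  rw [mul_add, h2] at hcomb
  linarith
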